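/- arXiv:2510.14759 — 8 statements merged into one kernel-verified Lean document; each statement's English description precedes it below -/
import Mathlib

section
/- Let B be a bounded self-adjoint positive semidefinite operator on a Hilbert space X, let c₀ > 0 with c₀·‖B‖ ≤ 1, and set P = I - c₀·B. Then for every real s ≥ 0 and every integer k ≥ 1, the operator norm of B^s·P^k satisfies ‖B^s P^k‖ ≤ s^s · c₀^{-s} · k^{-s}. -/
open Real in
private lemma key_scalar_stmt2 {s c₀ x : ℝ} (hs : 0 ≤ s) (hc₀ : 0 < c₀) {k : ℕ} (hk : 1 ≤ k)
    (hx : 0 ≤ x) (hx1 : c₀ * x ≤ 1) :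
    x ^ s * (1 - c₀ * x) ^ k ≤ s ^ s * c₀ ^ (-s) * (k : ℝ) ^ (-s) := by
  rcases eq_or_lt_of_le hs with rfl | hs'
  · simp only [Real.rpow_zero, one_mul, mul_one, neg_zero]
    exact pow_le_one₀ (by linarith) (by nlinarith [mul_nonneg hc₀.le hx])
  · have hk0 : (0:ℝ) < k := by exact_mod_cast hk
    set t := (k:ℝ) * c₀ with ht
    have ht0 : 0 < t := by positivity
    have h1 : (1 - c₀ * x) ^ k ≤ Real.exp (-(t * x)) := by
      calc (1 - c₀*x)^k ≤ Real.exp (-(c₀*x)) ^ k := by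
            apply pow_le_pow_left₀ (by linarith)
            · linarith [Real.add_one_le_exp (-(c₀*x))]
        _ = Real.exp (-(t*x)) := by
            rw [← Real.exp_nat_mul, ht]; ring_nf
    have h2 : x ^ s ≤ (s / t) ^ s * Real.exp (t * x) := by
      have hxle : x ≤ (s / t) * Real.exp (t * x / s) := by
        have h' : t * x / s ≤ Real.exp (t * x / s) := by
          linarith [Real.add_one_le_exp (t * x / s)]
        calc x = (s / t) * (t * x / s) := by field_simp
          _ ≤ (s / t) * Real.exp (t * x / s) :=
            mul_le_mul_of_nonneg_left h' (by positivity)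
      calc x ^ s ≤ ((s/t) * Real.exp (t*x/s)) ^ s := Real.rpow_le_rpow hx hxle hs
        _ = (s/t)^s * (Real.exp (t*x/s))^s :=
            Real.mul_rpow (by positivity) (by positivity)
        _ = (s/t)^s * Real.exp (t*x) := by
            rw [← Real.exp_mul, div_mul_cancel₀ _ (ne_of_gt hs')]
    have hmul : x ^ s * (1 - c₀ * x) ^ k ≤ ((s/t)^s * Real.exp (t*x)) * Real.exp (-(t*x)) := by
      apply mul_le_mul h2 h1 (pow_nonneg (by linarith) k) (by positivity)
    have heq : ((s/t)^s * Real.exp (t*x)) * Real.exp (-(t*x)) = (s/t)^s := by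
      rw [mul_assoc, ← Real.exp_add]; simp
    rw [heq] at hmul
    refine hmul.trans_eq ?_
    rw [div_eq_mul_inv, Real.mul_rpow hs (by positivity), Real.inv_rpow ht0.le,
      ← Real.rpow_neg ht0.le, ht, Real.mul_rpow hk0.le hc₀.le]
    ring

/-- For a bounded self-adjoint positive semidefinite operator `B` on a Hilbert space,
`c₀ > 0` with `c₀‖B‖ ≤ 1` and `P = I - c₀B`, for every real `s ≥ 0` and `k ≥ 1`,
`‖B^s P^k‖ ≤ s^s c₀^{-s} k^{-s}` (with the convention `0^0 = 1`). -/
theorem stmt2 {E : Type*} [NormedAddCommGroup E] [InnerProductSpace ℂ E] [CompleteSpace E]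
    (B : E →L[ℂ] E) (hB : IsSelfAdjoint B) (hBpos : 0 ≤ B)
    (c₀ : ℝ) (hc₀ : 0 < c₀) (hc₀B : c₀ * ‖B‖ ≤ 1)
    (P : E →L[ℂ] E) (hP : P = 1 - c₀ • B)
    (s : ℝ) (hs : 0 ≤ s) (k : ℕ) (hk : 1 ≤ k) :
    ‖CFC.rpow B s * P ^ k‖ ≤ s ^ s * c₀ ^ (-s) * (k : ℝ) ^ (-s) := by
  rcases subsingleton_or_nontrivial E with hE | hE
  · have : (CFC.rpow B s * P ^ k) = 0 := Subsingleton.elim _ _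
    rw [this, norm_zero]
    positivity
  have hspec : ∀ x ∈ spectrum ℝ B, 0 ≤ x ∧ c₀ * x ≤ 1 := by
    intro x hx
    have h0 : 0 ≤ x := spectrum_nonneg_of_nonneg hBpos hx
    have h1 : ‖x‖ ≤ ‖B‖ := spectrum.norm_le_norm_of_mem hx
    rw [Real.norm_eq_abs, abs_of_nonneg h0] at h1
    exact ⟨h0, le_trans (by nlinarith) hc₀B⟩
  have hconts : ContinuousOn (fun x : ℝ => x ^ s) (spectrum ℝ B) := by
    intro x _
    exact (Real.continuousAt_rpow_const x s (Or.inr hs)).continuousWithinAt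
  have hPf : P = cfc (fun x : ℝ => 1 - c₀ * x) B := by
    rw [cfc_sub _ _ B (by fun_prop) (by fun_prop), cfc_const_one ℝ B,
      cfc_const_mul _ _ B (by fun_prop), cfc_id' ℝ B, hP]
  have hPk : P ^ k = cfc (fun x : ℝ => (1 - c₀ * x) ^ k) B := by
    rw [hPf, ← cfc_pow _ k B]
  have hrB : CFC.rpow B s = cfc (fun x : ℝ => x ^ s) B := by
    rw [CFC.rpow, cfc_nnreal_eq_real _ _ hBpos]
    apply cfc_congr
    intro x hx
    have h0 := (hspec x hx).1
    simp [NNReal.coe_rpow, Real.coe_toNNReal x h0]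
  rw [hrB, hPk, ← cfc_mul _ _ B hconts (by fun_prop)]
  apply norm_cfc_le (by positivity)
  intro x hx
  obtain ⟨h0, h1⟩ := hspec x hx
  rw [Real.norm_eq_abs, abs_of_nonneg (mul_nonneg (Real.rpow_nonneg h0 s)
    (pow_nonneg (by linarith) k))]
  exact key_scalar_stmt2 hs hc₀ hk h0 h1
end

section
/- Let B be a bounded self-adjoint positive semidefinite operator on a Hilbert space, c₀ > 0 with c₀‖B‖ ≤ 1, and P = I - c₀B. Then for all natural numbers t, k ≥ 1, ‖(I - P^t)·P^k‖ ≤ t/(k+t). -/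
set_option maxHeartbeats 1000000

private lemma scalar_aux2 (x : ℝ) (hx0 : 0 ≤ x) (hx1 : x ≤ 1) (k : ℕ) :
    (k : ℝ) * (1 - x) * x ^ k ≤ 1 - x ^ k := by
  induction k with
  | zero => simp
  | succ k ih =>
    have hxk : x ^ k ≤ 1 := pow_le_one₀ hx0 hx1
    have hxk0 : 0 ≤ x ^ k := pow_nonneg hx0 k
    have hxx : x * x ^ k ≤ 1 := by nlinarith
    push_cast
    simp only [pow_succ]
    nlinarith [mul_le_mul_of_nonneg_left ih hx0,
      mul_nonneg (sub_nonneg.mpr hx1) (sub_nonneg.mpr hxx)]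

private lemma scalar_aux (t k : ℕ) (hkt : (0:ℝ) < (k : ℝ) + (t : ℝ)) (x : ℝ) (hx0 : 0 ≤ x) (hx1 : x ≤ 1) :
    (1 - x ^ t) * x ^ k ≤ (t : ℝ) / ((k : ℝ) + (t : ℝ)) := by
  have hb : 1 + (t : ℝ) * (x - 1) ≤ x ^ t := by
    have h := one_add_mul_le_pow (a := x - 1) (by linarith : (-2 : ℝ) ≤ x - 1) t
    have hx' : 1 + (x - 1) = x := by ring
    rwa [hx'] at h
  have h1 : 1 - x ^ t ≤ (t : ℝ) * (1 - x) := by linarith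
  have h2 := scalar_aux2 x hx0 hx1 k
  have hxt : x ^ t ≤ 1 := pow_le_one₀ hx0 hx1
  have hxt0 : 0 ≤ x ^ t := pow_nonneg hx0 t
  have hxk0 : 0 ≤ x ^ k := pow_nonneg hx0 k
  rw [le_div_iff₀ hkt]
  have s1 : (1 - x ^ t) * x ^ k ≤ ((t : ℝ) * (1 - x)) * x ^ k :=
    mul_le_mul_of_nonneg_right h1 hxk0
  have hA1 : (k : ℝ) * ((1 - x ^ t) * x ^ k) ≤ (t : ℝ) * (1 - x ^ k) := by
    calc (k : ℝ) * ((1 - x ^ t) * x ^ k) ≤ (k : ℝ) * (((t : ℝ) * (1 - x)) * x ^ k) :=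
          mul_le_mul_of_nonneg_left s1 (Nat.cast_nonneg k)
      _ = (t : ℝ) * ((k : ℝ) * (1 - x) * x ^ k) := by ring
      _ ≤ (t : ℝ) * (1 - x ^ k) := mul_le_mul_of_nonneg_left h2 (Nat.cast_nonneg t)
  have hA2 : (t : ℝ) * ((1 - x ^ t) * x ^ k) ≤ (t : ℝ) * x ^ k :=
    mul_le_mul_of_nonneg_left (by nlinarith) (Nat.cast_nonneg t)
  nlinarith [hA1, hA2]

/-- For a bounded self-adjoint positive semidefinite operator `B` on a Hilbert space,
`c₀ > 0` with `c₀‖B‖ ≤ 1` and `P = I - c₀B`, for all `t, k ≥ 1`,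
`‖(I - P^t) P^k‖ ≤ t/(k+t)`. -/
theorem stmt3 {E : Type*} [NormedAddCommGroup E] [InnerProductSpace ℂ E] [CompleteSpace E]
    (B : E →L[ℂ] E) (hB : IsSelfAdjoint B) (hBpos : 0 ≤ B)
    (c₀ : ℝ) (hc₀ : 0 < c₀) (hc₀B : c₀ * ‖B‖ ≤ 1)
    (P : E →L[ℂ] E) (hP : P = 1 - c₀ • B)
    (t k : ℕ) (ht : 1 ≤ t) (hk : 1 ≤ k) :
    ‖(1 - P ^ t) * P ^ k‖ ≤ (t : ℝ) / ((k : ℝ) + (t : ℝ)) := by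
  obtain hE | hE := subsingleton_or_nontrivial E
  · rw [Subsingleton.elim ((1 - P ^ t) * P ^ k) 0, norm_zero]
    positivity
  have hsmul_sa : IsSelfAdjoint (c₀ • B) := by
    rw [IsSelfAdjoint, star_smul, star_trivial, hB.star_eq]
  have hsmul_nonneg : 0 ≤ c₀ • B := by
    rw [ContinuousLinearMap.nonneg_iff_isPositive] at hBpos ⊢
    refine ⟨ContinuousLinearMap.isSelfAdjoint_iff_isSymmetric.mp hsmul_sa, fun x => ?_⟩
    have h := hBpos.2 x
    simp only [ContinuousLinearMap.reApplyInnerSelf_apply, ContinuousLinearMap.smul_apply] at h ⊢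
    rw [RCLike.real_smul_eq_coe_smul (K := ℂ), inner_smul_left, RCLike.conj_ofReal,
      RCLike.re_ofReal_mul]
    exact mul_nonneg hc₀.le h
  have hsmul_le : c₀ • B ≤ 1 := by
    have hn : ‖c₀ • B‖ ≤ 1 := by
      rw [norm_smul, Real.norm_eq_abs, abs_of_pos hc₀]; exact hc₀B
    exact (CStarAlgebra.norm_le_one_iff_of_nonneg (c₀ • B) hsmul_nonneg).mp hn
  have hPsa : IsSelfAdjoint P := by
    rw [hP, IsSelfAdjoint, star_sub, star_one, hsmul_sa.star_eq]
  have h0P : 0 ≤ P := by rw [hP]; exact sub_nonneg.mpr hsmul_le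
  have hP1 : P ≤ 1 := by rw [hP]; exact sub_le_self 1 hsmul_nonneg
  have hPnorm : ‖P‖ ≤ 1 := (CStarAlgebra.norm_le_one_iff_of_nonneg P h0P).mpr hP1
  have hspec : ∀ x ∈ spectrum ℝ P, 0 ≤ x ∧ x ≤ 1 := by
    intro x hx
    refine ⟨spectrum_nonneg_of_nonneg h0P hx, ?_⟩
    have := (spectrum.norm_le_norm_of_mem hx).trans hPnorm
    rw [Real.norm_eq_abs] at this
    exact (abs_le.mp this).2
  have key : (1 - P ^ t) * P ^ k = cfc (fun x : ℝ => (1 - x ^ t) * x ^ k) P := by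
    rw [cfc_mul _ _ P (by fun_prop) (by fun_prop),
      cfc_sub _ _ P (by fun_prop) (by fun_prop),
      cfc_pow_id P t, cfc_pow_id P k, cfc_const_one ℝ P]
  rw [key]
  apply norm_cfc_le (div_nonneg (Nat.cast_nonneg t) (by positivity))
  intro x hx
  obtain ⟨hx0, hx1⟩ := hspec x hx
  rw [Real.norm_eq_abs, abs_of_nonneg
    (mul_nonneg (sub_nonneg.mpr (pow_le_one₀ hx0 hx1)) (pow_nonneg hx0 k))]
  have hk1 : (1:ℝ) ≤ (k:ℝ) := by exact_mod_cast hk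
  have ht1 : (1:ℝ) ≤ (t:ℝ) := by exact_mod_cast ht
  exact scalar_aux t k (by linarith) x hx0 hx1
end

section
/- Let A₁,…,Aₙ : X → Yᵢ be bounded linear operators between Hilbert spaces, let i be a uniformly distributed random index in {1,…,n}, set B = (1/n)·Σᵢ Aᵢ*Aᵢ and L = maxᵢ ‖Aᵢ‖², and let A : X → Y₁×⋯×Yₙ be given by Ax = (A₁x,…,Aₙx). Let R : X → X be a deterministic bounded linear operator and x ∈ X a fixed vector. Then E[‖R(B - Aᵢ*Aᵢ)x‖²] ≤ (L/n)·‖R‖²·‖Ax‖². -/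
open scoped ComplexInnerProductSpace in
open ContinuousLinearMap in
/-- With `A₁,…,Aₙ : X → Yᵢ` bounded linear operators between Hilbert spaces, `i` uniform on
`{1,…,n}`, `B = (1/n) Σᵢ Aᵢ*Aᵢ`, `L = maxᵢ ‖Aᵢ‖²` and `‖Ax‖² = Σᵢ ‖Aᵢx‖²`, for any
deterministic bounded linear `R : X → X` and `x ∈ X`,
`E[‖R(B - Aᵢ*Aᵢ)x‖²] ≤ (L/n) ‖R‖² ‖Ax‖²`. -/
theorem stmt5 {E : Type*} [NormedAddCommGroup E] [InnerProductSpace ℂ E] [CompleteSpace E]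
    {n : ℕ} (hn : 0 < n) {F : Fin n → Type*} [∀ i, NormedAddCommGroup (F i)]
    [∀ i, InnerProductSpace ℂ (F i)] [∀ i, CompleteSpace (F i)]
    (A : ∀ i, E →L[ℂ] F i)
    (B : E →L[ℂ] E) (hB : B = (n : ℝ)⁻¹ • ∑ i, (adjoint (A i)).comp (A i))
    (L : ℝ) (hL : L = ⨆ i, ‖A i‖ ^ 2)
    (R : E →L[ℂ] E) (x : E) :
    (n : ℝ)⁻¹ * ∑ i, ‖R ((B - (adjoint (A i)).comp (A i)) x)‖ ^ 2
      ≤ L / n * ‖R‖ ^ 2 * ∑ i, ‖A i x‖ ^ 2 := by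
  haveI : Nonempty (Fin n) := Fin.pos_iff_nonempty.mp hn
  have hn' : (0:ℝ) < n := Nat.cast_pos.mpr hn
  set v : Fin n → E := fun i => R (((adjoint (A i)).comp (A i)) x) with hv
  set m : E := R (B x) with hm
  have hmv : ∑ i, v i = (n:ℝ) • m := by
    rw [hm, hB]
    simp only [ContinuousLinearMap.smul_apply, ContinuousLinearMap.sum_apply, map_smul,
      map_sum, smul_smul, hv, map_smul_of_tower]
    rw [mul_inv_cancel₀ (ne_of_gt hn'), one_smul]
  have key : ∀ i, R ((B - (adjoint (A i)).comp (A i)) x) = m - v i := by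
    intro i
    simp [hm, hv, ContinuousLinearMap.sub_apply, map_sub]
  have step1 : ∑ i, ‖m - v i‖^2 ≤ ∑ i, ‖v i‖^2 := by
    have expand : ∀ i : Fin n, ‖m - v i‖^2
        = ‖m‖^2 - 2 * RCLike.re ((inner ℂ m (v i) : ℂ)) + ‖v i‖^2 := fun i =>
      @norm_sub_sq ℂ E _ _ _ m (v i)
    have hsum : ∑ i, RCLike.re ((inner ℂ m (v i) : ℂ)) = (n:ℝ) * ‖m‖^2 := by
      rw [← map_sum, ← inner_sum, hmv, RCLike.real_smul_eq_coe_smul (K := ℂ),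
        inner_smul_right, inner_self_eq_norm_sq_to_K]
      norm_cast
    calc ∑ i, ‖m - v i‖^2
        = ∑ i, (‖m‖^2 - 2 * RCLike.re ((inner ℂ m (v i) : ℂ)) + ‖v i‖^2) := by
          exact Finset.sum_congr rfl fun i _ => expand i
      _ = (n:ℝ) * ‖m‖^2 - 2 * ((n:ℝ) * ‖m‖^2) + ∑ i, ‖v i‖^2 := by
          rw [Finset.sum_add_distrib, Finset.sum_sub_distrib, Finset.sum_const,
            ← Finset.mul_sum, hsum]
          simp [Finset.card_univ, nsmul_eq_mul]
      _ ≤ ∑ i, ‖v i‖^2 := by nlinarith [sq_nonneg ‖m‖, hn']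
  have step2 : ∀ i : Fin n, ‖v i‖^2 ≤ L * ‖R‖^2 * ‖A i x‖^2 := by
    intro i
    have hAL : ‖A i‖^2 ≤ L := by
      rw [hL]
      exact le_ciSup (f := fun i => ‖A i‖ ^ 2) (Set.Finite.bddAbove (Set.finite_range _)) i
    have h1 : ‖v i‖ ≤ ‖R‖ * (‖A i‖ * ‖A i x‖) := by
      calc ‖v i‖ ≤ ‖R‖ * ‖adjoint (A i) (A i x)‖ := R.le_opNorm _
        _ ≤ ‖R‖ * (‖adjoint (A i)‖ * ‖A i x‖) := by
            gcongr; exact (adjoint (A i)).le_opNorm _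
        _ = ‖R‖ * (‖A i‖ * ‖A i x‖) := by
            rw [LinearIsometryEquiv.norm_map adjoint (A i)]
    have h2 : ‖v i‖^2 ≤ (‖R‖ * (‖A i‖ * ‖A i x‖))^2 := by
      apply sq_le_sq' _ h1
      nlinarith [norm_nonneg (v i), norm_nonneg R, norm_nonneg (A i), norm_nonneg (A i x)]
    nlinarith [norm_nonneg R, norm_nonneg (A i x), sq_nonneg ‖A i x‖,
      mul_nonneg (sq_nonneg ‖R‖) (sq_nonneg ‖A i x‖)]
  calc (n : ℝ)⁻¹ * ∑ i, ‖R ((B - (adjoint (A i)).comp (A i)) x)‖ ^ 2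
      = (n : ℝ)⁻¹ * ∑ i, ‖m - v i‖ ^ 2 := by
        congr 1; exact Finset.sum_congr rfl fun i _ => by rw [key i]
    _ ≤ (n : ℝ)⁻¹ * ∑ i, ‖v i‖ ^ 2 :=
        mul_le_mul_of_nonneg_left step1 (by positivity)
    _ ≤ (n : ℝ)⁻¹ * ∑ i, L * ‖R‖^2 * ‖A i x‖^2 :=
        mul_le_mul_of_nonneg_left (Finset.sum_le_sum fun i _ => step2 i) (by positivity)
    _ = L / n * ‖R‖ ^ 2 * ∑ i, ‖A i x‖ ^ 2 := by
        rw [← Finset.mul_sum]; ring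
end

section
/- With the same setting as before (Aᵢ : X → Yᵢ bounded linear, B = (1/n)Σ Aᵢ*Aᵢ, A the stacked operator, i uniform on {1,…,n}), for any deterministic bounded linear operator R : X → X and any x ∈ X, E[‖R(B - Aᵢ*Aᵢ)x‖²] ≤ ‖R B^{1/2}‖²·‖Ax‖². -/
set_option synthInstance.maxHeartbeats 1000000
set_option maxHeartbeats 1000000

open ContinuousLinearMap in
private lemma aux_isPositive_adjoint_comp {E F : Type*} [NormedAddCommGroup E]
    [InnerProductSpace ℂ E] [CompleteSpace E] [NormedAddCommGroup F]
    [InnerProductSpace ℂ F] [CompleteSpace F] (A : E →L[ℂ] F) :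
    ((adjoint A).comp A).IsPositive := by
  constructor
  · rw [← ContinuousLinearMap.isSelfAdjoint_iff_isSymmetric, IsSelfAdjoint, ContinuousLinearMap.star_eq_adjoint, adjoint_comp, adjoint_adjoint]
  · intro v
    rw [ContinuousLinearMap.reApplyInnerSelf]
    simp only [ContinuousLinearMap.comp_apply]
    rw [adjoint_inner_left]
    exact inner_self_nonneg

open ContinuousLinearMap in
private lemma aux_isPositive_smul {E : Type*} [NormedAddCommGroup E]
    [InnerProductSpace ℂ E] [CompleteSpace E] (T : E →L[ℂ] E) (hT : T.IsPositive)
    {c : ℝ} (hc : 0 ≤ c) : (c • T).IsPositive := by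
  rw [isPositive_iff_complex] at hT ⊢
  intro v
  obtain ⟨h1, h2⟩ := hT v
  simp only [ContinuousLinearMap.smul_apply]
  rw [RCLike.real_smul_eq_coe_smul (K := ℂ), inner_smul_left, RCLike.conj_ofReal]
  constructor
  · rw [← h1]
    push_cast
    ring_nf
    simp [Complex.ofReal_mul]
  · simp only [RCLike.mul_re, RCLike.ofReal_re, RCLike.ofReal_im, Complex.ofReal_re,
      Complex.ofReal_im, zero_mul, sub_zero]
    exact mul_nonneg hc h2

open ContinuousLinearMap in
/-- With `A₁,…,Aₙ : X → Yᵢ` bounded linear operators, `B = (1/n) Σᵢ Aᵢ*Aᵢ`, `i` uniform on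
`{1,…,n}` and `‖Ax‖² = Σᵢ ‖Aᵢx‖²`, for any deterministic bounded linear `R : X → X` and
`x ∈ X`, `E[‖R(B - Aᵢ*Aᵢ)x‖²] ≤ ‖R B^{1/2}‖² ‖Ax‖²`. -/
theorem stmt6 {E : Type*} [NormedAddCommGroup E] [InnerProductSpace ℂ E] [CompleteSpace E]
    {n : ℕ} (hn : 0 < n) {F : Fin n → Type*} [∀ i, NormedAddCommGroup (F i)]
    [∀ i, InnerProductSpace ℂ (F i)] [∀ i, CompleteSpace (F i)]
    (A : ∀ i, E →L[ℂ] F i)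
    (B : E →L[ℂ] E) (hB : B = (n : ℝ)⁻¹ • ∑ i, (adjoint (A i)).comp (A i))
    (R : E →L[ℂ] E) (x : E) :
    (n : ℝ)⁻¹ * ∑ i, ‖R ((B - (adjoint (A i)).comp (A i)) x)‖ ^ 2
      ≤ ‖R * CFC.sqrt B‖ ^ 2 * ∑ i, ‖A i x‖ ^ 2 := by
  classical
  have hn' : (0:ℝ) < n := Nat.cast_pos.mpr hn
  set S : E →L[ℂ] E := ∑ i, (adjoint (A i)).comp (A i) with hS
  have hSpos : S.IsPositive := by
    rw [hS]
    exact Finset.sum_induction _ _ (fun a b ha hb => ha.add hb) isPositive_zero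
      (fun i _ => aux_isPositive_adjoint_comp (A i))
  have hBpos' : B.IsPositive := by
    rw [hB]; exact aux_isPositive_smul _ hSpos (inv_nonneg.mpr hn'.le)
  have hBpos : (0 : E →L[ℂ] E) ≤ B := (nonneg_iff_isPositive B).mpr hBpos'
  set sB := CFC.sqrt B with hsB
  have hsq : sB * sB = B := CFC.sqrt_mul_sqrt_self B hBpos
  have hsBsa : IsSelfAdjoint sB := IsSelfAdjoint.of_nonneg (CFC.sqrt_nonneg _)
  have hsBadj : adjoint sB = sB := by
    rw [← ContinuousLinearMap.star_eq_adjoint]; exact hsBsa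
  have hSB : S = (n:ℝ) • B := by
    rw [hB, smul_smul, mul_inv_cancel₀ (ne_of_gt hn'), one_smul]
  set K := ‖R * sB‖ with hKdef
  have hK : 0 ≤ K := norm_nonneg _
  -- key inner identity
  have hkey : ∀ v : E, ∑ i, ‖A i v‖^2 = (n:ℝ) * ‖sB v‖^2 := by
    intro v
    have hSv : (inner ℂ (S v) v : ℂ) = ((∑ i, ‖A i v‖^2 : ℝ) : ℂ) := by
      rw [hS]
      simp only [ContinuousLinearMap.sum_apply]
      rw [sum_inner]
      push_cast
      refine Finset.sum_congr rfl fun i _ => ?_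
      rw [Function.comp_apply, adjoint_inner_left, inner_self_eq_norm_sq_to_K]
      norm_num
    have hBv : (inner ℂ (B v) v : ℂ) = ((‖sB v‖^2 : ℝ) : ℂ) := by
      conv_lhs => rw [← hsq]
      calc (inner ℂ ((sB * sB) v) v : ℂ) = inner ℂ ((adjoint sB) (sB v)) v := by
            rw [hsBadj, ContinuousLinearMap.mul_apply]
      _ = inner ℂ (sB v) (sB v) := adjoint_inner_left sB v (sB v)
      _ = ((‖sB v‖^2 : ℝ) : ℂ) := by rw [inner_self_eq_norm_sq_to_K]; norm_cast
    have h2 : (inner ℂ (S v) v : ℂ) = ((n:ℝ) : ℂ) * (inner ℂ (B v) v : ℂ) := by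
      rw [hSB]
      simp only [ContinuousLinearMap.smul_apply]
      rw [RCLike.real_smul_eq_coe_smul (K := ℂ), inner_smul_left, RCLike.conj_ofReal]
      norm_cast
    rw [hSv, hBv] at h2
    exact_mod_cast h2
  -- operator norm bound
  have hTi : ∀ i, ‖R ((adjoint (A i)) ((A i) x))‖^2 ≤ (n:ℝ) * K^2 * ‖A i x‖^2 := by
    intro i
    set Ti : F i →L[ℂ] E := R ∘L adjoint (A i) with hTidef
    have hadj : ∀ u : E, ‖(adjoint Ti) u‖^2 ≤ (n:ℝ) * K^2 * ‖u‖^2 := by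
      intro u
      have h1 : adjoint Ti = (A i) ∘L adjoint R := by
        rw [hTidef, adjoint_comp, adjoint_adjoint]
      rw [h1]
      simp only [ContinuousLinearMap.comp_apply]
      have h2 : ‖A i ((adjoint R) u)‖^2 ≤ ∑ j, ‖A j ((adjoint R) u)‖^2 :=
        Finset.single_le_sum (f := fun j => ‖A j ((adjoint R) u)‖^2)
          (fun j _ => sq_nonneg _) (Finset.mem_univ i)
      have h3 : sB ((adjoint R) u) = (adjoint (R * sB)) u := by
        rw [ContinuousLinearMap.mul_def, adjoint_comp, hsBadj,
          ContinuousLinearMap.comp_apply]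
      have h4 : ‖(adjoint (R * sB)) u‖ ≤ K * ‖u‖ := by
        calc ‖(adjoint (R * sB)) u‖ ≤ ‖adjoint (R * sB)‖ * ‖u‖ := le_opNorm _ _
        _ = K * ‖u‖ := by rw [LinearIsometryEquiv.norm_map]
      calc ‖A i ((adjoint R) u)‖^2 ≤ ∑ j, ‖A j ((adjoint R) u)‖^2 := h2
      _ = (n:ℝ) * ‖sB ((adjoint R) u)‖^2 := hkey _
      _ = (n:ℝ) * ‖(adjoint (R * sB)) u‖^2 := by rw [h3]
      _ ≤ (n:ℝ) * (K * ‖u‖)^2 := mul_le_mul_of_nonneg_left (pow_le_pow_left₀ (norm_nonneg _) h4 2) (by positivity)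
      _ = (n:ℝ) * K^2 * ‖u‖^2 := by ring
    have hTn : ‖Ti‖ ≤ Real.sqrt ((n:ℝ) * K^2) := by
      rw [← LinearIsometryEquiv.norm_map (adjoint : (F i →L[ℂ] E) ≃ₗᵢ⋆[ℂ] (E →L[ℂ] F i)) Ti]
      refine opNorm_le_bound _ (Real.sqrt_nonneg _) (fun u => ?_)
      calc ‖(adjoint Ti) u‖ = Real.sqrt (‖(adjoint Ti) u‖^2) :=
            (Real.sqrt_sq (norm_nonneg _)).symm
      _ ≤ Real.sqrt ((n:ℝ) * K^2 * ‖u‖^2) := Real.sqrt_le_sqrt (hadj u)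
      _ = Real.sqrt ((n:ℝ) * K^2) * ‖u‖ := by
          rw [Real.sqrt_mul (by positivity), Real.sqrt_sq (norm_nonneg u)]
    have h5 : ‖R ((adjoint (A i)) ((A i) x))‖ = ‖Ti ((A i) x)‖ := rfl
    have h6 : ‖Ti ((A i) x)‖ ≤ Real.sqrt ((n:ℝ) * K^2) * ‖A i x‖ :=
      le_trans (le_opNorm _ _) (by gcongr)
    rw [h5]
    calc ‖Ti ((A i) x)‖^2 ≤ (Real.sqrt ((n:ℝ) * K^2) * ‖A i x‖)^2 :=
          pow_le_pow_left₀ (norm_nonneg _) h6 2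
    _ = (n:ℝ) * K^2 * ‖A i x‖^2 := by
          rw [mul_pow, Real.sq_sqrt (by positivity)]
  -- bias-variance
  set m := R (B x) with hm
  set y : Fin n → E := fun i => R ((adjoint (A i)) ((A i) x)) with hy
  have hsumy : ∑ i, y i = ((n:ℝ) : ℂ) • m := by
    rw [hy, hm]
    have h7 : ∑ i, R ((adjoint (A i)) ((A i) x)) = R (S x) := by
      rw [hS, ← map_sum]
      congr 1
      simp [ContinuousLinearMap.sum_apply, ContinuousLinearMap.comp_apply]
    rw [h7, hSB]
    simp only [ContinuousLinearMap.smul_apply]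
    rw [map_smul_of_tower, RCLike.real_smul_eq_coe_smul (K := ℂ)]
    norm_cast
    exact Nat.cast_smul_eq_nsmul ℂ _ _
  have hbv : ∑ i, ‖m - y i‖^2 ≤ ∑ i, ‖y i‖^2 := by
    have h1 : ∑ i, ‖m - y i‖^2
        = (n:ℝ)*‖m‖^2 - 2 * Complex.re (inner ℂ m (∑ i, y i) : ℂ) + ∑ i, ‖y i‖^2 := by
      have he : ∀ i : Fin n, ‖m - y i‖^2
          = ‖m‖^2 - 2 * Complex.re (inner ℂ m (y i) : ℂ) + ‖y i‖^2 := fun i =>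
        @norm_sub_sq ℂ _ _ _ _ m (y i)
      rw [Finset.sum_congr rfl (fun i _ => he i), inner_sum, Complex.re_sum, Finset.mul_sum,
        Finset.sum_add_distrib, Finset.sum_sub_distrib, Finset.sum_const,
        Finset.card_univ, Fintype.card_fin, nsmul_eq_mul]
    have h2 : Complex.re (inner ℂ m (((n:ℝ):ℂ) • m) : ℂ) = (n:ℝ) * ‖m‖^2 := by
      rw [inner_smul_right, inner_self_eq_norm_sq_to_K]
      norm_cast
      simp [Complex.mul_re, ← Complex.ofReal_pow]
    rw [h1, hsumy, h2]
    nlinarith [sq_nonneg ‖m‖, hn']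
  -- final assembly
  have hrw : ∀ i : Fin n, R ((B - (adjoint (A i)).comp (A i)) x) = m - y i := by
    intro i
    simp only [ContinuousLinearMap.sub_apply, map_sub, hm, hy, ContinuousLinearMap.comp_apply]
  calc (n : ℝ)⁻¹ * ∑ i, ‖R ((B - (adjoint (A i)).comp (A i)) x)‖ ^ 2
      = (n : ℝ)⁻¹ * ∑ i, ‖m - y i‖^2 := by
        congr 1
        exact Finset.sum_congr rfl fun i _ => by rw [hrw i]
    _ ≤ (n : ℝ)⁻¹ * ∑ i, ‖y i‖^2 := mul_le_mul_of_nonneg_left hbv (by positivity)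
    _ ≤ (n : ℝ)⁻¹ * ∑ i, (n:ℝ) * K^2 * ‖A i x‖^2 :=
        mul_le_mul_of_nonneg_left (Finset.sum_le_sum fun i _ => hTi i) (by positivity)
    _ = K^2 * ∑ i, ‖A i x‖^2 := by
        rw [← Finset.mul_sum, ← mul_assoc, ← mul_assoc, inv_mul_cancel₀ (ne_of_gt hn'), one_mul]
end

section
/- With the same setting (Aᵢ : X → Yᵢ, B = (1/n)Σ Aᵢ*Aᵢ, L = maxᵢ‖Aᵢ‖², A the stacked operator), for any deterministic bounded linear operator R : X → X, any x ∈ X, and any index i ∈ {1,…,n}, the deterministic bound ‖R(B - Aᵢ*Aᵢ)x‖ ≤ min(√L·‖R‖, √n·‖R B^{1/2}‖)·‖Ax‖ holds. -/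
set_option synthInstance.maxHeartbeats 1000000
set_option maxHeartbeats 1000000

open ContinuousLinearMap in
private lemma aux_smul_pos {E : Type*} [NormedAddCommGroup E] [InnerProductSpace ℂ E]
    [CompleteSpace E] (S : E →L[ℂ] E) (hS : S.IsPositive) (r : ℝ) (hr : 0 ≤ r) :
    (r • S).IsPositive := by
  constructor
  · exact ContinuousLinearMap.isSelfAdjoint_iff_isSymmetric.mp (IsSelfAdjoint.smul (star_trivial r) hS.isSelfAdjoint)
  · intro x
    have h := hS.2 x
    simp only [reApplyInnerSelf, ContinuousLinearMap.smul_apply] at h ⊢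
    rw [← algebraMap_smul ℂ r (S x), Complex.coe_algebraMap, inner_smul_left,
      Complex.conj_ofReal]
    simp only [RCLike.re_to_complex, Complex.re_ofReal_mul] at h ⊢
    exact mul_nonneg hr h

/-- variance-type inequality: if `∑ vⱼ = n • u` then `∑ ‖u - vⱼ‖² ≤ ∑ ‖vⱼ‖²`. -/
private lemma aux_sum_sub {E : Type*} [NormedAddCommGroup E] [InnerProductSpace ℂ E]
    {n : ℕ} (u : E) (v : Fin n → E) (h : ∑ j, v j = (n : ℝ) • u) :
    ∑ j, ‖u - v j‖ ^ 2 ≤ ∑ j, ‖v j‖ ^ 2 := by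
  have hexp : ∀ j, ‖u - v j‖ ^ 2
      = ‖u‖ ^ 2 - 2 * RCLike.re (inner ℂ u (v j) : ℂ) + ‖v j‖ ^ 2 := fun j =>
    norm_sub_sq (𝕜 := ℂ) u (v j)
  have hsum : ∑ j, RCLike.re (inner ℂ u (v j) : ℂ) = (n : ℝ) * ‖u‖ ^ 2 := by
    rw [← map_sum, ← inner_sum, h, ← algebraMap_smul ℂ (n : ℝ) u, Complex.coe_algebraMap,
      inner_smul_right]
    simp only [RCLike.re_to_complex, Complex.re_ofReal_mul]
    rw [← RCLike.re_to_complex, inner_self_eq_norm_sq (𝕜 := ℂ)]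
  simp only [hexp]
  rw [Finset.sum_add_distrib, Finset.sum_sub_distrib, Finset.sum_const, Finset.card_univ,
    Fintype.card_fin, ← Finset.mul_sum, hsum]
  have h1 : (0:ℝ) ≤ (n : ℝ) * ‖u‖ ^ 2 := by positivity
  simp only [nsmul_eq_mul]
  nlinarith [h1]

open ContinuousLinearMap in
/-- With `A₁,…,Aₙ : X → Yᵢ` bounded linear operators, `B = (1/n) Σᵢ Aᵢ*Aᵢ`,
`L = maxᵢ ‖Aᵢ‖²` and `‖Ax‖ = (Σᵢ ‖Aᵢx‖²)^{1/2}`, for any deterministic bounded linear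
`R : X → X`, any `x ∈ X` and any index `i`,
`‖R(B - Aᵢ*Aᵢ)x‖ ≤ min(√L ‖R‖, √n ‖R B^{1/2}‖) ‖Ax‖`. -/
theorem stmt7 {E : Type*} [NormedAddCommGroup E] [InnerProductSpace ℂ E] [CompleteSpace E]
    {n : ℕ} (hn : 0 < n) {F : Fin n → Type*} [∀ i, NormedAddCommGroup (F i)]
    [∀ i, InnerProductSpace ℂ (F i)] [∀ i, CompleteSpace (F i)]
    (A : ∀ i, E →L[ℂ] F i)
    (B : E →L[ℂ] E) (hB : B = (n : ℝ)⁻¹ • ∑ i, (adjoint (A i)).comp (A i))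
    (L : ℝ) (hL : L = ⨆ i, ‖A i‖ ^ 2)
    (R : E →L[ℂ] E) (x : E) (i : Fin n) :
    ‖R ((B - (adjoint (A i)).comp (A i)) x)‖
      ≤ min (Real.sqrt L * ‖R‖) (Real.sqrt n * ‖R * CFC.sqrt B‖)
          * Real.sqrt (∑ j, ‖A j x‖ ^ 2) := by
  classical
  set T : Fin n → (E →L[ℂ] E) := fun j => (adjoint (A j)).comp (A j) with hTdef
  have hn' : (0:ℝ) < n := by exact_mod_cast hn
  -- positivity facts
  have hTpos : ∀ j, (T j).IsPositive := by
    intro j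
    simpa [hTdef, ContinuousLinearMap.one_def] using (ContinuousLinearMap.isPositive_one (E := F j)).adjoint_conj (A j)
  have hSpos : (∑ j, T j).IsPositive := by
    rw [← ContinuousLinearMap.nonneg_iff_isPositive]
    exact Finset.sum_nonneg fun j _ => (ContinuousLinearMap.nonneg_iff_isPositive _).2 (hTpos j)
  have hBpos : (0 : E →L[ℂ] E) ≤ B := by
    rw [ContinuousLinearMap.nonneg_iff_isPositive, hB]
    exact aux_smul_pos _ hSpos _ (by positivity)
  -- sqrt B facts
  set Q : E →L[ℂ] E := CFC.sqrt B with hQdef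
  have hQsa : IsSelfAdjoint Q := IsSelfAdjoint.of_nonneg (CFC.sqrt_nonneg B)
  have hQadj : adjoint Q = Q := by
    rw [← ContinuousLinearMap.star_eq_adjoint]; exact hQsa
  have hQQ : ∀ w, Q (Q w) = B w := by
    intro w
    have := CFC.sqrt_mul_sqrt_self B hBpos
    calc Q (Q w) = (Q * Q) w := rfl
    _ = B w := by rw [this]
  -- ∑ T j applied
  have hTn : ∀ w, (∑ j, T j) w = (n : ℝ) • B w := by
    intro w
    have : (n : ℝ) • B = ∑ j, T j := by
      rw [hB, smul_smul, mul_inv_cancel₀ hn'.ne', one_smul]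
    rw [← this, ContinuousLinearMap.smul_apply]
  -- re ⟪B w, w⟫ = ‖Q w‖²
  have hBinner : ∀ w, RCLike.re (inner ℂ (B w) w : ℂ) = ‖Q w‖ ^ 2 := by
    intro w
    rw [← hQQ w, ← hQadj]
    rw [adjoint_inner_left, hQadj, inner_self_eq_norm_sq (𝕜 := ℂ)]
  -- ∑ ‖A j w‖² = n ‖Q w‖²
  have hsumA : ∀ w, ∑ j, ‖A j w‖ ^ 2 = (n : ℝ) * ‖Q w‖ ^ 2 := by
    intro w
    have h1 : ∀ j, ‖A j w‖ ^ 2 = RCLike.re (inner ℂ ((T j) w) w : ℂ) := fun j =>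
      ContinuousLinearMap.apply_norm_sq_eq_inner_adjoint_left (A j) w
    simp only [h1]
    rw [← map_sum, ← sum_inner, ← ContinuousLinearMap.sum_apply, hTn w,
      ← algebraMap_smul ℂ (n : ℝ) (B w), Complex.coe_algebraMap, inner_smul_left,
      Complex.conj_ofReal]
    simp only [RCLike.re_to_complex, Complex.re_ofReal_mul]
    rw [← RCLike.re_to_complex, hBinner w]
  -- L bounds
  have hLj : ∀ j, ‖A j‖ ≤ Real.sqrt L := by
    intro j
    have hb : BddAbove (Set.range fun k => ‖A k‖ ^ 2) := (Set.finite_range _).bddAbove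
    have : ‖A j‖ ^ 2 ≤ L := hL ▸ le_ciSup hb j
    have h2 : ‖A j‖ = Real.sqrt (‖A j‖ ^ 2) := (Real.sqrt_sq (norm_nonneg _)).symm
    rw [h2]
    exact Real.sqrt_le_sqrt this
  -- bound on ‖R ∘L adjoint (A j)‖ by √n ‖R √B‖
  have hcomp : ∀ j, ‖R ∘L adjoint (A j)‖ ≤ Real.sqrt n * ‖R * Q‖ := by
    intro j
    have he1 : ‖R ∘L adjoint (A j)‖ = ‖A j ∘L adjoint R‖ := by
      rw [← ContinuousLinearMap.adjoint.norm_map (R ∘L adjoint (A j)), adjoint_comp,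
        adjoint_adjoint]
    have he2 : ‖Q ∘L adjoint R‖ = ‖R * Q‖ := by
      rw [← ContinuousLinearMap.adjoint.norm_map (Q ∘L adjoint R), adjoint_comp,
        adjoint_adjoint, hQadj]
      rfl
    rw [he1]
    refine ContinuousLinearMap.opNorm_le_bound _ (by positivity) fun z => ?_
    have key : ‖A j (adjoint R z)‖ ^ 2 ≤ (n : ℝ) * (‖R * Q‖ * ‖z‖) ^ 2 := by
      have h3 : ‖A j (adjoint R z)‖ ^ 2 ≤ ∑ k, ‖A k (adjoint R z)‖ ^ 2 :=
        Finset.single_le_sum (f := fun k => ‖A k (adjoint R z)‖ ^ 2)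
          (fun k _ => by positivity) (Finset.mem_univ j)
      have h4 : ‖Q (adjoint R z)‖ ≤ ‖R * Q‖ * ‖z‖ := by
        calc ‖Q (adjoint R z)‖ = ‖(Q ∘L adjoint R) z‖ := rfl
        _ ≤ ‖Q ∘L adjoint R‖ * ‖z‖ := le_opNorm _ _
        _ = ‖R * Q‖ * ‖z‖ := by rw [he2]
      calc ‖A j (adjoint R z)‖ ^ 2 ≤ ∑ k, ‖A k (adjoint R z)‖ ^ 2 := h3
      _ = (n : ℝ) * ‖Q (adjoint R z)‖ ^ 2 := hsumA _
      _ ≤ (n : ℝ) * (‖R * Q‖ * ‖z‖) ^ 2 := by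
          refine mul_le_mul_of_nonneg_left ?_ (le_of_lt hn')
          exact pow_le_pow_left₀ (norm_nonneg _) h4 2
    calc ‖(A j ∘L adjoint R) z‖ = Real.sqrt (‖A j (adjoint R z)‖ ^ 2) := by
          rw [Real.sqrt_sq (norm_nonneg _)]; rfl
    _ ≤ Real.sqrt ((n : ℝ) * (‖R * Q‖ * ‖z‖) ^ 2) := Real.sqrt_le_sqrt key
    _ = Real.sqrt n * (‖R * Q‖ * ‖z‖) := by
        rw [Real.sqrt_mul (by positivity), Real.sqrt_sq (by positivity)]
    _ = Real.sqrt n * ‖R * Q‖ * ‖z‖ := by ring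
  -- per-term bound
  set C : ℝ := min (Real.sqrt L * ‖R‖) (Real.sqrt n * ‖R * CFC.sqrt B‖) with hCdef
  have hC0 : 0 ≤ C := le_min (by positivity) (by positivity)
  have hterm : ∀ j, ‖R ((T j) x)‖ ≤ C * ‖A j x‖ := by
    intro j
    rw [hCdef, min_mul_of_nonneg _ _ (norm_nonneg (A j x))]
    refine le_min ?_ ?_
    · calc ‖R ((T j) x)‖ ≤ ‖R‖ * ‖(T j) x‖ := le_opNorm _ _
      _ = ‖R‖ * ‖adjoint (A j) ((A j) x)‖ := rfl
      _ ≤ ‖R‖ * (‖adjoint (A j)‖ * ‖A j x‖) := by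
          refine mul_le_mul_of_nonneg_left ?_ (norm_nonneg _)
          exact le_opNorm _ _
      _ = ‖R‖ * (‖A j‖ * ‖A j x‖) := by rw [ContinuousLinearMap.adjoint.norm_map]
      _ ≤ ‖R‖ * (Real.sqrt L * ‖A j x‖) := by
          refine mul_le_mul_of_nonneg_left ?_ (norm_nonneg _)
          exact mul_le_mul_of_nonneg_right (hLj j) (norm_nonneg _)
      _ = Real.sqrt L * ‖R‖ * ‖A j x‖ := by ring
    · calc ‖R ((T j) x)‖ = ‖(R ∘L adjoint (A j)) (A j x)‖ := rfl
      _ ≤ ‖R ∘L adjoint (A j)‖ * ‖A j x‖ := le_opNorm _ _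
      _ ≤ Real.sqrt n * ‖R * CFC.sqrt B‖ * ‖A j x‖ :=
          mul_le_mul_of_nonneg_right (hcomp j) (norm_nonneg _)
  -- main chain
  have hkey : ‖R ((B - T i) x)‖ ^ 2 ≤ C ^ 2 * ∑ j, ‖A j x‖ ^ 2 := by
    have e1 : ∀ j, R ((B - T j) x) = R (B x) - R ((T j) x) := by
      intro j; rw [ContinuousLinearMap.sub_apply, map_sub]
    have h1 : ‖R ((B - T i) x)‖ ^ 2 ≤ ∑ j, ‖R (B x) - R ((T j) x)‖ ^ 2 := by
      rw [e1 i]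
      exact Finset.single_le_sum (f := fun j => ‖R (B x) - R ((T j) x)‖ ^ 2)
        (fun k _ => by positivity) (Finset.mem_univ i)
    have h2 : ∑ j, ‖R (B x) - R ((T j) x)‖ ^ 2 ≤ ∑ j, ‖R ((T j) x)‖ ^ 2 := by
      refine aux_sum_sub (R (B x)) (fun j => R ((T j) x)) ?_
      rw [← map_sum R (fun j => (T j) x), ← ContinuousLinearMap.sum_apply, hTn x,
        map_smul_of_tower]
    have h3 : ∑ j, ‖R ((T j) x)‖ ^ 2 ≤ ∑ j, (C * ‖A j x‖) ^ 2 :=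
      Finset.sum_le_sum fun j _ => pow_le_pow_left₀ (norm_nonneg _) (hterm j) 2
    calc ‖R ((B - T i) x)‖ ^ 2 ≤ ∑ j, ‖R (B x) - R ((T j) x)‖ ^ 2 := h1
    _ ≤ ∑ j, ‖R ((T j) x)‖ ^ 2 := h2
    _ ≤ ∑ j, (C * ‖A j x‖) ^ 2 := h3
    _ = C ^ 2 * ∑ j, ‖A j x‖ ^ 2 := by rw [Finset.mul_sum]; congr 1; ext j; ring
  calc ‖R ((B - T i) x)‖ = Real.sqrt (‖R ((B - T i) x)‖ ^ 2) :=
        (Real.sqrt_sq (norm_nonneg _)).symm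
  _ ≤ Real.sqrt (C ^ 2 * ∑ j, ‖A j x‖ ^ 2) := Real.sqrt_le_sqrt hkey
  _ = C * Real.sqrt (∑ j, ‖A j x‖ ^ 2) := by
      rw [Real.sqrt_mul (by positivity), Real.sqrt_sq hC0]
end

section
/- Let B be self-adjoint positive semidefinite with spectrum contained in {0} ∪ [λ₀, 1/c₀] for some λ₀ > 0 and c₀ > 0, and set P = I - c₀B. Then c₀·‖(Σ_{j=0}^{k-1} P^j)·B^{1/2}‖ ≤ λ₀^{-1/2} for every k ≥ 1. -/
set_option synthInstance.maxHeartbeats 1000000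
set_option maxHeartbeats 1000000

/-- If `B` is self-adjoint positive semidefinite with spectrum contained in
`{0} ∪ [λ₀, 1/c₀]` for some `λ₀ > 0`, `c₀ > 0`, and `P = I - c₀B`, then
`c₀ ‖(Σ_{j=0}^{k-1} P^j) B^{1/2}‖ ≤ λ₀^{-1/2}` for every `k ≥ 1`. -/
theorem stmt12 {E : Type*} [NormedAddCommGroup E] [InnerProductSpace ℂ E] [CompleteSpace E]
    (B : E →L[ℂ] E) (hB : IsSelfAdjoint B) (hBpos : 0 ≤ B)
    (lam₀ c₀ : ℝ) (hlam₀ : 0 < lam₀) (hc₀ : 0 < c₀)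
    (hspec : spectrum ℝ B ⊆ {0} ∪ Set.Icc lam₀ (1 / c₀))
    (P : E →L[ℂ] E) (hP : P = 1 - c₀ • B)
    (k : ℕ) (hk : 1 ≤ k) :
    c₀ * ‖(∑ j ∈ Finset.range k, P ^ j) * CFC.sqrt B‖ ≤ lam₀ ^ (-(1 / 2 : ℝ)) := by
  have hsqrt : CFC.sqrt B = cfc Real.sqrt B := by
    rw [CFC.sqrt_eq_cfc, cfc_nnreal_eq_real _ B hBpos]
    exact cfc_congr fun x _ => by
      rw [Real.coe_sqrt, Real.coe_toNNReal']
      rcases le_total 0 x with h | h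
      · rw [max_eq_left h]
      · rw [max_eq_right h, Real.sqrt_zero, Real.sqrt_eq_zero'.mpr h]
  have hPc : P = cfc (fun x : ℝ => 1 - c₀ * x) B := by
    rw [hP, cfc_sub (fun _ => (1:ℝ)) (fun x => c₀ * x) B (by fun_prop) (by fun_prop),
      cfc_const_mul_id c₀ B hB, show (fun _ : ℝ => (1:ℝ)) = 1 from rfl, cfc_one ℝ B]
  -- combine into one cfc
  have hkey : c₀ • ((∑ j ∈ Finset.range k, P ^ j) * CFC.sqrt B)
      = cfc (fun x : ℝ => c₀ * ((∑ j ∈ Finset.range k, (1 - c₀ * x) ^ j) * Real.sqrt x)) B := by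
    rw [cfc_const_mul _ _ B (by fun_prop),
      cfc_mul _ _ B (by fun_prop) (by fun_prop), hsqrt]
    have hsum : cfc (fun x : ℝ => ∑ j ∈ Finset.range k, (1 - c₀ * x) ^ j) B
        = ∑ j ∈ Finset.range k, P ^ j := by
      rw [show (fun x : ℝ => ∑ j ∈ Finset.range k, (1 - c₀ * x) ^ j)
          = ∑ j ∈ Finset.range k, (fun x : ℝ => (1 - c₀ * x) ^ j) by ext x; simp,
        cfc_sum _ B _ (fun i _ => by fun_prop)]
      refine Finset.sum_congr rfl fun j _ => ?_
      rw [hPc, ← cfc_pow _ _ B (by fun_prop)]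
    rw [hsum]
  have hrw : lam₀ ^ (-(1 / 2 : ℝ)) = (Real.sqrt lam₀)⁻¹ := by
    rw [Real.sqrt_eq_rpow, ← Real.rpow_neg hlam₀.le]
  have h1 : c₀ * ‖(∑ j ∈ Finset.range k, P ^ j) * CFC.sqrt B‖
      = ‖c₀ • ((∑ j ∈ Finset.range k, P ^ j) * CFC.sqrt B)‖ := by
    rw [norm_smul, Real.norm_of_nonneg hc₀.le]
  rw [h1, hkey, hrw]
  refine norm_cfc_le (by positivity) fun x hx => ?_
  rcases hspec hx with h0 | ⟨hl, hu⟩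
  · simp only [Set.mem_singleton_iff] at h0
    subst h0
    simp only [Real.sqrt_zero, mul_zero, norm_zero]
    positivity
  · have hx0 : 0 < x := lt_of_lt_of_le hlam₀ hl
    have hcx : c₀ * x ≤ 1 := by
      rw [le_div_iff₀ hc₀] at hu
      linarith [mul_comm x c₀]
    have hr0 : (0:ℝ) ≤ 1 - c₀ * x := by linarith
    have hS0 : 0 ≤ ∑ j ∈ Finset.range k, (1 - c₀ * x) ^ j :=
      Finset.sum_nonneg fun j _ => pow_nonneg hr0 j
    have hgeom : (∑ j ∈ Finset.range k, (1 - c₀ * x) ^ j) * (c₀ * x)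
        = 1 - (1 - c₀ * x) ^ k := by
      have := geom_sum_mul (1 - c₀ * x) k
      nlinarith [this]
    have hle1 : (∑ j ∈ Finset.range k, (1 - c₀ * x) ^ j) * (c₀ * x) ≤ 1 := by
      rw [hgeom]; nlinarith [pow_nonneg hr0 k]
    have hsx : 0 < Real.sqrt x := Real.sqrt_pos.mpr hx0
    have hxx : Real.sqrt x * Real.sqrt x = x := Real.mul_self_sqrt hx0.le
    rw [Real.norm_of_nonneg (by positivity)]
    have key : c₀ * ((∑ j ∈ Finset.range k, (1 - c₀ * x) ^ j) * Real.sqrt x)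
        ≤ (Real.sqrt x)⁻¹ := by
      rw [inv_eq_one_div, le_div_iff₀ hsx]
      nlinarith [hle1, hxx]
    refine key.trans ?_
    exact inv_anti₀ (Real.sqrt_pos.mpr hlam₀) (Real.sqrt_le_sqrt hl)
end

section
/- Let B be self-adjoint positive semidefinite, c₀ > 0 with c₀‖B‖ ≤ 1, P = I - c₀B. Then for every k ≥ 1, c₀·Σ_{j=0}^{k-1} ‖P^j B^{1/2}‖ ≤ 2·√(c₀·k). -/
set_option synthInstance.maxHeartbeats 1000000
set_option maxHeartbeats 1000000

private lemma stmt13_scalar (c₀ x : ℝ) (hc₀ : 0 < c₀) (hx0 : 0 ≤ x) (hx1 : c₀ * x ≤ 1)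
    (n : ℕ) (hn : 1 ≤ n) :
    (1 - c₀ * x) ^ n * Real.sqrt x ≤ Real.sqrt (1 / (2 * c₀ * n)) := by
  have h2 : 0 ≤ 1 - c₀ * x := by linarith
  have hn' : (0:ℝ) < n := by exact_mod_cast hn
  have hden : (0:ℝ) < 2 * c₀ * n := by positivity
  rw [show ((1 - c₀ * x) ^ n * Real.sqrt x) = Real.sqrt ((1 - c₀ * x) ^ (n * 2) * x) by
    rw [pow_mul, Real.sqrt_mul (by positivity), Real.sqrt_sq (by positivity)]]
  apply Real.sqrt_le_sqrt
  -- reduce to (1 - c₀x)^(2n) * x ≤ 1/(2c₀n)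
  set y : ℝ := 2 * c₀ * n * x with hy
  have hy0 : 0 ≤ y := by positivity
  have he1 : 1 - c₀ * x ≤ Real.exp (-(c₀ * x)) := by
    have := Real.add_one_le_exp (-(c₀ * x)); linarith
  have he2 : (1 - c₀ * x) ^ (n * 2) ≤ Real.exp (-(c₀ * x)) ^ (n * 2) :=
    pow_le_pow_left₀ h2 he1 _
  have he3 : Real.exp (-(c₀ * x)) ^ (n * 2) = Real.exp (-y) := by
    rw [← Real.exp_nat_mul]
    congr 1
    push_cast
    ring
  have hye : y ≤ Real.exp y := by
    have := Real.add_one_le_exp y; linarith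
  have hkey : Real.exp (-y) * y ≤ 1 := by
    rw [Real.exp_neg]
    rw [inv_mul_le_iff₀ (Real.exp_pos y), mul_one]
    exact hye
  have hfin : Real.exp (-y) * x ≤ 1 / (2 * c₀ * n) := by
    rw [le_div_iff₀ hden]
    calc Real.exp (-y) * x * (2 * c₀ * n) = Real.exp (-y) * y := by rw [hy]; ring
      _ ≤ 1 := hkey
  calc (1 - c₀ * x) ^ (n * 2) * x ≤ Real.exp (-y) * x := by
        rw [← he3]; exact mul_le_mul_of_nonneg_right he2 hx0
    _ ≤ 1 / (2 * c₀ * n) := hfin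

private lemma stmt13_sum (n : ℕ) :
    ∑ i ∈ Finset.range n, 1 / Real.sqrt (i + 1) ≤ 2 * Real.sqrt n := by
  induction n with
  | zero => simp
  | succ m ih =>
    rw [Finset.sum_range_succ]
    have ha : Real.sqrt m ^ 2 = m := Real.sq_sqrt (by positivity)
    have hb : Real.sqrt ((m:ℝ) + 1) ^ 2 = (m:ℝ) + 1 := Real.sq_sqrt (by positivity)
    have hbpos : 0 < Real.sqrt ((m:ℝ) + 1) := Real.sqrt_pos.mpr (by positivity)
    have h1 : 1 / Real.sqrt ((m:ℝ) + 1) ≤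
        2 * (Real.sqrt ((m:ℝ) + 1) - Real.sqrt m) := by
      rw [div_le_iff₀ hbpos]
      nlinarith [Real.sqrt_nonneg m, Real.sqrt_nonneg ((m:ℝ)+1),
        sq_nonneg (Real.sqrt ((m:ℝ)+1) - Real.sqrt m)]
    push_cast
    linarith

/-- For `B` self-adjoint positive semidefinite, `c₀ > 0` with `c₀‖B‖ ≤ 1` and
`P = I - c₀B`, for every `k ≥ 1`, `c₀ Σ_{j=0}^{k-1} ‖P^j B^{1/2}‖ ≤ 2 √(c₀ k)`. -/
theorem stmt13 {E : Type*} [NormedAddCommGroup E] [InnerProductSpace ℂ E] [CompleteSpace E]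
    (B : E →L[ℂ] E) (hB : IsSelfAdjoint B) (hBpos : 0 ≤ B)
    (c₀ : ℝ) (hc₀ : 0 < c₀) (hc₀B : c₀ * ‖B‖ ≤ 1)
    (P : E →L[ℂ] E) (hP : P = 1 - c₀ • B)
    (k : ℕ) (hk : 1 ≤ k) :
    c₀ * ∑ j ∈ Finset.range k, ‖P ^ j * CFC.sqrt B‖ ≤ 2 * Real.sqrt (c₀ * k) := by
  rcases subsingleton_or_nontrivial E with hE | hE
  · have h0 : ∀ j : ℕ, ‖P ^ j * CFC.sqrt B‖ = 0 := fun j => by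
      rw [Subsingleton.elim (P ^ j * CFC.sqrt B) 0, norm_zero]
    simp only [h0, Finset.sum_const_zero, mul_zero]
    positivity
  -- spectral bounds
  have hspec : ∀ x ∈ spectrum ℝ B, 0 ≤ x ∧ c₀ * x ≤ 1 := by
    intro x hx
    have h0 : 0 ≤ x := spectrum_nonneg_of_nonneg hBpos hx
    have h1 : ‖x‖ ≤ ‖B‖ := spectrum.norm_le_norm_of_mem hx
    rw [Real.norm_eq_abs, abs_of_nonneg h0] at h1
    exact ⟨h0, by nlinarith⟩
  -- representation via cfc
  have hkey : ∀ j : ℕ,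
      P ^ j * CFC.sqrt B = cfc (fun x : ℝ => (1 - c₀ * x) ^ j * Real.sqrt x) B := by
    intro j
    have hsqrt : CFC.sqrt B = cfc Real.sqrt B := by
      rw [CFC.sqrt_eq_cfc, cfc_nnreal_eq_real _ _ hBpos]
      exact cfc_congr fun x _ => (Real.sqrt.eq_1 x).symm
    have h1 : P = cfc (fun x : ℝ => 1 - c₀ * x) B := by
      rw [hP, cfc_sub (fun _ => (1:ℝ)) (fun x => c₀ * x) B, cfc_const_mul_id c₀ B hB,
        ← cfc_one (R := ℝ) B]
      rfl
    rw [hsqrt, h1, ← cfc_pow (fun x : ℝ => 1 - c₀ * x) j B,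
      ← cfc_mul (fun x : ℝ => (1 - c₀ * x) ^ j) Real.sqrt B]
  -- term bounds
  have hterm0 : ‖P ^ 0 * CFC.sqrt B‖ ≤ Real.sqrt (1 / c₀) := by
    rw [hkey 0]
    refine norm_cfc_le (Real.sqrt_nonneg _) fun x hx => ?_
    obtain ⟨h0, h1⟩ := hspec x hx
    rw [Real.norm_eq_abs,
      abs_of_nonneg (mul_nonneg (pow_nonneg (by linarith) 0) (Real.sqrt_nonneg x))]
    simp only [pow_zero, one_mul]
    exact Real.sqrt_le_sqrt (by rw [le_div_iff₀ hc₀]; linarith)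
  have htermj : ∀ j : ℕ, 1 ≤ j →
      ‖P ^ j * CFC.sqrt B‖ ≤ Real.sqrt (1 / (2 * c₀ * j)) := by
    intro j hj
    rw [hkey j]
    refine norm_cfc_le (Real.sqrt_nonneg _) fun x hx => ?_
    obtain ⟨h0, h1⟩ := hspec x hx
    rw [Real.norm_eq_abs,
      abs_of_nonneg (mul_nonneg (pow_nonneg (by linarith) j) (Real.sqrt_nonneg x))]
    exact stmt13_scalar c₀ x hc₀ h0 h1 j hj
  -- assemble
  obtain ⟨m, rfl⟩ : ∃ m, k = m + 1 := ⟨k - 1, by omega⟩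
  rw [Finset.sum_range_succ']
  have hsum1 : ∑ i ∈ Finset.range m, ‖P ^ (i + 1) * CFC.sqrt B‖ ≤
      Real.sqrt (1 / (2 * c₀)) * (2 * Real.sqrt m) := by
    calc ∑ i ∈ Finset.range m, ‖P ^ (i + 1) * CFC.sqrt B‖
        ≤ ∑ i ∈ Finset.range m, Real.sqrt (1 / (2 * c₀)) * (1 / Real.sqrt (i + 1)) := by
          refine Finset.sum_le_sum fun i _ => ?_
          refine (htermj (i + 1) (by omega)).trans_eq ?_
          rw [show (1 : ℝ) / (2 * c₀ * (((i:ℕ) + 1 : ℕ):ℝ)) =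
              (1 / (2 * c₀)) * (1 / (((i:ℝ)) + 1)) by push_cast; field_simp]
          rw [Real.sqrt_mul (by positivity)]
          simp [Real.sqrt_inv]
      _ = Real.sqrt (1 / (2 * c₀)) * ∑ i ∈ Finset.range m, 1 / Real.sqrt (i + 1) := by
          rw [Finset.mul_sum]
      _ ≤ Real.sqrt (1 / (2 * c₀)) * (2 * Real.sqrt m) := by
          exact mul_le_mul_of_nonneg_left (stmt13_sum m) (Real.sqrt_nonneg _)
  have hstep : c₀ * (∑ i ∈ Finset.range m, ‖P ^ (i + 1) * CFC.sqrt B‖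
      + ‖P ^ 0 * CFC.sqrt B‖) ≤
      c₀ * (Real.sqrt (1 / (2 * c₀)) * (2 * Real.sqrt m) + Real.sqrt (1 / c₀)) := by
    apply mul_le_mul_of_nonneg_left (by linarith) hc₀.le
  refine hstep.trans ?_
  -- pure scalar inequality
  have ha2 : Real.sqrt (1 / (2 * c₀)) ^ 2 = 1 / (2 * c₀) := Real.sq_sqrt (by positivity)
  have hb2 : Real.sqrt (1 / c₀) ^ 2 = 1 / c₀ := Real.sq_sqrt (by positivity)
  have hu2 : Real.sqrt (m : ℝ) ^ 2 = (m : ℝ) := Real.sq_sqrt (by positivity)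
  set a := Real.sqrt (1 / (2 * c₀)) with hadef
  set b := Real.sqrt (1 / c₀) with hbdef
  set u := Real.sqrt (m : ℝ) with hudef
  have ha0 : 0 ≤ a := Real.sqrt_nonneg _
  have hb0 : 0 ≤ b := Real.sqrt_nonneg _
  have hu0 : 0 ≤ u := Real.sqrt_nonneg _
  have hx2 : (c₀ * a * u) ^ 2 * 2 = c₀ * m := by
    have h : (c₀ * a * u) ^ 2 * 2 = c₀ ^ 2 * a ^ 2 * u ^ 2 * 2 := by ring
    rw [h, ha2, hu2]
    field_simp
  have hy2 : (c₀ * b) ^ 2 = c₀ := by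
    have h : (c₀ * b) ^ 2 = c₀ ^ 2 * b ^ 2 := by ring
    rw [h, hb2]
    field_simp
  have hc2 : Real.sqrt (c₀ * ((m : ℝ) + 1)) ^ 2 = c₀ * ((m : ℝ) + 1) :=
    Real.sq_sqrt (by positivity)
  have hcpos : 0 < Real.sqrt (c₀ * ((m : ℝ) + 1)) := Real.sqrt_pos.mpr (by positivity)
  set c := Real.sqrt (c₀ * ((m : ℝ) + 1)) with hcdef
  have hcast : (((m + 1 : ℕ)) : ℝ) = (m : ℝ) + 1 := by push_cast; ring
  rw [hcast]
  have hgoal : c₀ * (a * (2 * u) + b) = 2 * (c₀ * a * u) + c₀ * b := by ring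
  rw [hgoal]
  set x := c₀ * a * u with hxdef
  set y := c₀ * b with hydef
  have hx0 : 0 ≤ x := by positivity
  have hy0 : 0 ≤ y := by positivity
  nlinarith [sq_nonneg (x - y), sq_nonneg (2 * x + y - 2 * c), hx2, hy2, hc2, hcpos,
    hx0, hy0, hc₀, mul_pos hcpos hcpos]
end

section
/- Let c ≥ 2 + ln 2 and define ε* = 2/(c + √(c²-4)) and g(ε) = ε^{-1}·D^{ε/(1-ε)} where D = e^{c-2} (so ln D = c - 2). Then ε* ∈ (0, 1/2), ε* minimizes g on (0, 1/2], and g(ε*) ≤ c·e. -/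
/-- For `c ≥ 2 + ln 2`, with `ε* = 2/(c + √(c²-4))` and
`g(ε) = ε⁻¹ D^{ε/(1-ε)}` where `D = e^{c-2}`: `ε* ∈ (0, 1/2)`, `ε*` minimizes `g`
on `(0, 1/2]`, and `g(ε*) ≤ c e`. -/
theorem stmt17 (c : ℝ) (hc : 2 + Real.log 2 ≤ c)
    (D : ℝ) (hD : D = Real.exp (c - 2))
    (εs : ℝ) (hεs : εs = 2 / (c + Real.sqrt (c ^ 2 - 4)))
    (g : ℝ → ℝ) (hg : g = fun ε : ℝ => ε⁻¹ * D ^ (ε / (1 - ε))) :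
    εs ∈ Set.Ioo (0 : ℝ) (1 / 2)
      ∧ (∀ ε ∈ Set.Ioc (0 : ℝ) (1 / 2), g εs ≤ g ε)
      ∧ g εs ≤ c * Real.exp 1 := by
  have hl2 : (0.6931471803 : ℝ) < Real.log 2 := Real.log_two_gt_d9
  have hc2 : (5/2 : ℝ) < c := by linarith
  set s := Real.sqrt (c ^ 2 - 4) with hs
  have hs2 : s ^ 2 = c ^ 2 - 4 := Real.sq_sqrt (by nlinarith)
  have hs0 : 0 < s := Real.sqrt_pos.mpr (by nlinarith)
  have hcs : 0 < c + s := by linarith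
  have hε0 : 0 < εs := by rw [hεs]; positivity
  have hquad : εs ^ 2 - c * εs + 1 = 0 := by
    rw [hεs]; field_simp; nlinarith [hs2]
  have hεhalf : εs < 1 / 2 := by
    rw [hεs, div_lt_div_iff₀ hcs (by norm_num)]
    nlinarith [hs2, hs0]
  have h1s : 0 < 1 - εs := by linarith
  have hkey : εs * (c - 2) = (1 - εs) ^ 2 := by linear_combination -hquad
  -- value of g
  have hgval : ∀ ε : ℝ, g ε = ε⁻¹ * Real.exp ((c - 2) * (ε / (1 - ε))) := by
    intro ε
    rw [hg, hD]
    simp only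
    rw [Real.rpow_def_of_pos (Real.exp_pos _), Real.log_exp]
  -- exponent at εs
  have hEs : (c - 2) * (εs / (1 - εs)) = 1 - εs := by
    rw [mul_div_assoc']
    rw [div_eq_iff (by linarith : (1:ℝ) - εs ≠ 0)]
    linear_combination hkey
  have hgεs : g εs = εs⁻¹ * Real.exp (1 - εs) := by rw [hgval, hEs]
  refine ⟨⟨hε0, hεhalf⟩, ?_, ?_⟩
  · -- minimality
    rintro ε ⟨hε0', hε12⟩
    have h1e : 0 < 1 - ε := by linarith
    set A := (c - 2) * (ε / (1 - ε)) with hA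
    have hAe : A * (1 - ε) = (c - 2) * ε := by
      rw [hA]; field_simp
    have expand : εs * (1 + (A - (1 - εs))) * (1 - ε) - ε * (1 - ε) = (ε - εs) ^ 2 := by
      linear_combination εs * hAe + ε * hkey
    have h2 : ε ≤ εs * (1 + (A - (1 - εs))) := by
      nlinarith [expand, sq_nonneg (ε - εs), h1e]
    have h1 : (1 : ℝ) + (A - (1 - εs)) ≤ Real.exp (A - (1 - εs)) := by
      linarith [Real.add_one_le_exp (A - (1 - εs))]
    have hsplit : Real.exp A = Real.exp (1 - εs) * Real.exp (A - (1 - εs)) := by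
      rw [← Real.exp_add]; ring_nf
    have goal' : ε * Real.exp (1 - εs) ≤ εs * Real.exp A := by
      rw [hsplit]
      calc ε * Real.exp (1 - εs)
          ≤ (εs * (1 + (A - (1 - εs)))) * Real.exp (1 - εs) :=
            mul_le_mul_of_nonneg_right h2 (Real.exp_pos _).le
        _ ≤ (εs * Real.exp (A - (1 - εs))) * Real.exp (1 - εs) :=
            mul_le_mul_of_nonneg_right
              (mul_le_mul_of_nonneg_left h1 hε0.le) (Real.exp_pos _).le
        _ = εs * (Real.exp (1 - εs) * Real.exp (A - (1 - εs))) := by ring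
    rw [hgεs, hgval ε]
    rw [inv_mul_eq_div, inv_mul_eq_div, div_le_div_iff₀ hε0 hε0']
    linarith [goal']
  · -- bound
    rw [hgεs]
    have hm : Real.exp (-εs) * Real.exp εs = 1 := by
      rw [← Real.exp_add]; simp
    have hb : (1 + εs) * Real.exp (-εs) ≤ 1 := by
      have h := mul_le_mul_of_nonneg_right (Real.add_one_le_exp εs)
        (Real.exp_pos (-εs)).le
      nlinarith [hm, h]
    have h2' : (1 : ℝ) ≤ c * εs * (1 + εs) := by nlinarith [hquad, hε0]
    have h4 : Real.exp (-εs) ≤ c * εs := by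
      rw [← mul_le_mul_iff_of_pos_right (show (0:ℝ) < 1 + εs by linarith)]
      nlinarith [hb, h2']
    have he : Real.exp (1 - εs) = Real.exp 1 * Real.exp (-εs) := by
      rw [← Real.exp_add]; ring_nf
    rw [he, inv_mul_eq_div, div_le_iff₀ hε0]
    calc Real.exp 1 * Real.exp (-εs)
        ≤ Real.exp 1 * (c * εs) := mul_le_mul_of_nonneg_left h4 (Real.exp_pos 1).le
      _ = c * Real.exp 1 * εs := by ring
end
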